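/- Let θ₀ ∈ ℝ and δ > 0 be such that the open interval (θ₀ − δ, θ₀ + δ) contains no integer multiple of π. Then the set K_{θ₀,δ} = ⋃_{θ ∈ (θ₀−δ, θ₀+δ)} [k_θ] (the union of the conjugacy classes of the rotation matrices k_θ for θ in this interval) is an open subset of SL(2,ℝ). -/

import Mathlib

open Matrix MeasureTheory

/-- `SL(2,ℝ)`: the group of 2×2 real matrices of determinant 1. -/
abbrev SL2 := Matrix.SpecialLinearGroup (Fin 2) ℝ

/-- The topology on `SL(2,ℝ)` is the subspace topology inherited from the
space of 2×2 real matrices. -/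
instance : TopologicalSpace SL2 :=
  TopologicalSpace.induced (fun g : SL2 => (g : Matrix (Fin 2) (Fin 2) ℝ)) inferInstance

/-- The conjugacy class `[γ] = {g γ g⁻¹ : g ∈ SL(2,ℝ)}`. -/
def conjClass (γ : SL2) : Set SL2 := {x | ∃ g : SL2, g * γ * g⁻¹ = x}

/-- The rotation matrix `k_θ = [[cos θ, −sin θ],[sin θ, cos θ]]` as an element of `SL(2,ℝ)`. -/
noncomputable def kmat (θ : ℝ) : SL2 :=
  ⟨!![Real.cos θ, -Real.sin θ; Real.sin θ, Real.cos θ], by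
    simp [Matrix.det_fin_two_of]
    nlinarith [Real.sin_sq_add_cos_sq θ]⟩

/-- The diagonal matrix `a_t = [[eᵗ, 0],[0, e⁻ᵗ]]` as an element of `SL(2,ℝ)`. -/
noncomputable def amat (t : ℝ) : SL2 :=
  ⟨!![Real.exp t, 0; 0, Real.exp (-t)], by
    simp [Matrix.det_fin_two_of, ← Real.exp_add]⟩

/-- The unipotent matrix `n_u = [[1, u],[0, 1]]` as an element of `SL(2,ℝ)`. -/
def nmat (u : ℝ) : SL2 :=
  ⟨!![1, u; 0, 1], by simp [Matrix.det_fin_two_of]⟩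

/-- An element of `SL(2,ℝ)` is conjugate to `k_θ` (for `sin θ ≠ 0`) iff its trace is
`2 cos θ` and its lower-left entry has the same sign as `sin θ`. -/
lemma mem_conjClass_kmat_iff {θ : ℝ} (hs : Real.sin θ ≠ 0) (g : SL2) :
    g ∈ conjClass (kmat θ) ↔
      g.1 0 0 + g.1 1 1 = 2 * Real.cos θ ∧ 0 < Real.sin θ * g.1 1 0 := by
  constructor
  · rintro ⟨u, hu⟩
    have hm : (g : Matrix (Fin 2) (Fin 2) ℝ) = u.1 * (kmat θ).1 * (u⁻¹).1 := by
      rw [← hu]; simp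
    rw [Matrix.SpecialLinearGroup.coe_inv, Matrix.adjugate_fin_two] at hm
    have h00 := congrFun (congrFun hm 0) 0
    have h11 := congrFun (congrFun hm 1) 1
    have h10 := congrFun (congrFun hm 1) 0
    have hdet : u.1 0 0 * u.1 1 1 - u.1 0 1 * u.1 1 0 = 1 := by
      have := u.2; rwa [Matrix.det_fin_two] at this
    simp [Matrix.mul_apply, Fin.sum_univ_two, kmat] at h00 h11 h10
    constructor
    · rw [h00, h11]; linear_combination 2 * Real.cos θ * hdet
    · have h10' : g.1 1 0 = Real.sin θ * (u.1 1 0 ^ 2 + u.1 1 1 ^ 2) := by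
        rw [h10]; ring
      have hne : u.1 1 0 ≠ 0 ∨ u.1 1 1 ≠ 0 := by
        by_contra hc
        push_neg at hc
        rw [hc.1, hc.2] at hdet; simp at hdet
      have hpos : 0 < u.1 1 0 ^ 2 + u.1 1 1 ^ 2 := by
        rcases hne with h | h
        · nlinarith [sq_nonneg (u.1 1 1), sq_pos_iff.mpr h]
        · nlinarith [sq_nonneg (u.1 1 0), sq_pos_iff.mpr h]
      rw [h10']
      nlinarith [sq_pos_iff.mpr hs]
  · rintro ⟨htr, hsgn⟩
    set A := g.1 0 0 with hA
    set B := g.1 0 1 with hB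
    set C := g.1 1 0 with hC
    set D := g.1 1 1 with hD
    have hpyth : Real.sin θ ^ 2 + Real.cos θ ^ 2 = 1 := Real.sin_sq_add_cos_sq θ
    have hdet : A * D - B * C = 1 := by
      have := g.2; rwa [Matrix.det_fin_two] at this
    have hCne : C ≠ 0 := by
      intro h0; rw [h0] at hsgn; simp at hsgn
    have hdivpos : 0 < Real.sin θ / C := by
      rcases lt_or_gt_of_ne hCne with h | h
      · have : Real.sin θ < 0 := by nlinarith
        exact div_pos_of_neg_of_neg this h
      · have : 0 < Real.sin θ := by nlinarith
        exact div_pos this h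
    set x := Real.sqrt (Real.sin θ / C) with hxdef
    have hxpos : 0 < x := Real.sqrt_pos.2 hdivpos
    have hx2 : x ^ 2 = Real.sin θ / C := Real.sq_sqrt hdivpos.le
    have hx2' : x ^ 2 * C = Real.sin θ := by
      rw [hx2]; field_simp
    set t := (A - D) / (2 * Real.sin θ) with htdef
    have hdetu : Matrix.det !![x, t * x; 0, x⁻¹] = 1 := by
      simp [Matrix.det_fin_two_of]; field_simp
    set u : SL2 := ⟨!![x, t * x; 0, x⁻¹], hdetu⟩ with hu
    refine ⟨u, ?_⟩
    have key : u * kmat θ = g * u := by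
      apply Subtype.ext
      rw [Matrix.SpecialLinearGroup.coe_mul, Matrix.SpecialLinearGroup.coe_mul]
      simp only [kmat, hu]
      ext i j
      fin_cases i <;> fin_cases j <;>
        simp [Matrix.mul_apply, Fin.sum_univ_two, htdef] <;>
        field_simp <;>
        ring_nf
      · linear_combination (-1 : ℝ) * htr
      · simp only [← hB]
        linear_combination (-(x^2 * (A + Real.cos θ))) * htr +
          (2*B) * hx2' + (2*x^2) * hdet + (-2*x^2) * hpyth
      · simp only [← hC]
        linear_combination (-1 : ℝ) * hx2'
      · simp only [← hC]
        linear_combination (-(A - D)) * hx2' + (-Real.sin θ) * htr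
    calc u * kmat θ * u⁻¹ = g * u * u⁻¹ := by rw [key]
    _ = g := by group

/-- If the interval (θ₀ − δ, θ₀ + δ) contains no integer multiple of π, then the union
of the conjugacy classes of the rotations k_θ, θ in this interval, is open in SL(2,ℝ). -/
theorem isOpen_union_conjClass_kmat (θ₀ δ : ℝ) (hδ : 0 < δ)
    (h : ∀ n : ℤ, (n : ℝ) * Real.pi ∉ Set.Ioo (θ₀ - δ) (θ₀ + δ)) :
    IsOpen (⋃ θ ∈ Set.Ioo (θ₀ - δ) (θ₀ + δ), conjClass (kmat θ)) := by
  set a := θ₀ - δ with ha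
  set b := θ₀ + δ with hb
  have hab : a < b := by rw [ha, hb]; linarith
  have hπ : (0:ℝ) < Real.pi := Real.pi_pos
  set n : ℤ := ⌊a / Real.pi⌋ with hn
  have hn1 : (n : ℝ) * Real.pi ≤ a := by
    rw [hn]
    have := Int.floor_le (a / Real.pi)
    calc (⌊a / Real.pi⌋ : ℝ) * Real.pi ≤ (a / Real.pi) * Real.pi := by nlinarith
    _ = a := by field_simp
  have hn2 : a < ((n : ℝ) + 1) * Real.pi := by
    rw [hn]
    have h1 := Int.lt_floor_add_one (a / Real.pi)
    have h2 : a / Real.pi * Real.pi = a := div_mul_cancel₀ a (ne_of_gt hπ)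
    nlinarith
  have hb2 : b ≤ ((n : ℝ) + 1) * Real.pi := by
    by_contra hc
    push_neg at hc
    exact h (n + 1) (by push_cast; exact ⟨hn2, hc⟩)
  set ε : ℝ := (-1 : ℝ) ^ n with hε
  have hεcases : ε = 1 ∨ ε = -1 := by
    rcases Int.even_or_odd n with he | he
    · exact Or.inl (he.neg_one_zpow)
    · exact Or.inr (he.neg_one_zpow)
  have hsin : ∀ θ ∈ Set.Ioo a b, 0 < ε * Real.sin θ := by
    intro θ hθ
    have h1 : 0 < θ - (n : ℝ) * Real.pi := by have := hθ.1; linarith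
    have h2 : θ - (n : ℝ) * Real.pi < Real.pi := by
      have := hθ.2; nlinarith
    have h3 : Real.sin (θ - (n : ℝ) * Real.pi) = (-1 : ℝ) ^ n * Real.sin θ :=
      Real.sin_sub_int_mul_pi θ n
    have := Real.sin_pos_of_pos_of_lt_pi h1 h2
    rw [h3] at this
    rw [hε]; exact this
  have hsinne : ∀ θ ∈ Set.Ioo a b, Real.sin θ ≠ 0 := by
    intro θ hθ h0
    have := hsin θ hθ
    rw [h0, mul_zero] at this
    exact lt_irrefl 0 this
  -- the union equals an explicitly open set
  have hset : (⋃ θ ∈ Set.Ioo a b, conjClass (kmat θ)) =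
      ((fun g : SL2 => g.1 0 0 + g.1 1 1) ⁻¹' ((fun θ => 2 * Real.cos θ) '' Set.Ioo a b)) ∩
      ((fun g : SL2 => ε * g.1 1 0) ⁻¹' (Set.Ioi 0)) := by
    ext g
    simp only [Set.mem_iUnion, Set.mem_inter_iff, Set.mem_preimage, Set.mem_image,
      Set.mem_Ioi, exists_prop]
    constructor
    · rintro ⟨θ, hθ, hg⟩
      rw [mem_conjClass_kmat_iff (hsinne θ hθ) g] at hg
      obtain ⟨htr, hsgn⟩ := hg
      refine ⟨⟨θ, hθ, htr.symm⟩, ?_⟩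
      have hp := hsin θ hθ
      rcases hεcases with h1 | h1 <;> rw [h1] at hp ⊢ <;> nlinarith
    · rintro ⟨⟨θ, hθ, htr⟩, hsgn⟩
      refine ⟨θ, hθ, ?_⟩
      rw [mem_conjClass_kmat_iff (hsinne θ hθ) g]
      refine ⟨htr.symm, ?_⟩
      have hp := hsin θ hθ
      rcases hεcases with h1 | h1 <;> rw [h1] at hp hsgn <;> nlinarith
  rw [hset]
  -- continuity of the relevant maps
  have hcoe : Continuous (fun g : SL2 => (g : Matrix (Fin 2) (Fin 2) ℝ)) :=
    continuous_induced_dom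
  have hc1 : Continuous (fun g : SL2 => g.1 0 0 + g.1 1 1) :=
    (hcoe.matrix_elem 0 0).add (hcoe.matrix_elem 1 1)
  have hc2 : Continuous (fun g : SL2 => ε * g.1 1 0) :=
    continuous_const.mul (hcoe.matrix_elem 1 0)
  -- the image of the interval under 2 cos is open
  have hkey : ∀ u ∈ Set.Icc a b, ∀ v ∈ Set.Icc a b, u < v →
      ε * Real.cos v < ε * Real.cos u := by
    intro u hu v hv huv
    have h1 : Real.cos (u - (n : ℝ) * Real.pi) = ε * Real.cos u := by
      rw [hε]; exact Real.cos_sub_int_mul_pi u n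
    have h2 : Real.cos (v - (n : ℝ) * Real.pi) = ε * Real.cos v := by
      rw [hε]; exact Real.cos_sub_int_mul_pi v n
    rw [← h1, ← h2]
    apply Real.strictAntiOn_cos
    · constructor
      · have := hu.1; linarith
      · have := hu.2; nlinarith
    · constructor
      · have := hv.1; linarith
      · have := hv.2; nlinarith
    · linarith
  have hcont : ContinuousOn (fun θ : ℝ => 2 * Real.cos θ) (Set.Icc a b) :=
    (continuous_const.mul Real.continuous_cos).continuousOn
  have hTopen : IsOpen ((fun θ : ℝ => 2 * Real.cos θ) '' Set.Ioo a b) := by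
    rcases hεcases with h1 | h1
    · have himg : (fun θ : ℝ => 2 * Real.cos θ) '' Set.Ioo a b
          = Set.Ioo (2 * Real.cos b) (2 * Real.cos a) := by
        apply Set.Subset.antisymm
        · rintro _ ⟨θ, hθ, rfl⟩
          have k1 := hkey a ⟨le_refl a, hab.le⟩ θ ⟨hθ.1.le, hθ.2.le⟩ hθ.1
          have k2 := hkey θ ⟨hθ.1.le, hθ.2.le⟩ b ⟨hab.le, le_refl b⟩ hθ.2
          rw [h1] at k1 k2
          show 2 * Real.cos θ ∈ Set.Ioo (2 * Real.cos b) (2 * Real.cos a)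
          exact ⟨by linarith, by linarith⟩
        · exact intermediate_value_Ioo' hab.le hcont
      rw [himg]; exact isOpen_Ioo
    · have himg : (fun θ : ℝ => 2 * Real.cos θ) '' Set.Ioo a b
          = Set.Ioo (2 * Real.cos a) (2 * Real.cos b) := by
        apply Set.Subset.antisymm
        · rintro _ ⟨θ, hθ, rfl⟩
          have k1 := hkey a ⟨le_refl a, hab.le⟩ θ ⟨hθ.1.le, hθ.2.le⟩ hθ.1
          have k2 := hkey θ ⟨hθ.1.le, hθ.2.le⟩ b ⟨hab.le, le_refl b⟩ hθ.2
          rw [h1] at k1 k2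
          show 2 * Real.cos θ ∈ Set.Ioo (2 * Real.cos a) (2 * Real.cos b)
          exact ⟨by linarith, by linarith⟩
        · exact intermediate_value_Ioo hab.le hcont
      rw [himg]; exact isOpen_Ioo
  exact (hTopen.preimage hc1).inter (isOpen_Ioi.preimage hc2)
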